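/- Let X be a topological space containing a nonempty open set U whose closure is not all of X. Then every strongly topologically transitive map f : X → X is surjective. -/
import Mathlib

theorem stmt4 {X : Type*} [TopologicalSpace X] (U : Set X)
    (hUopen : IsOpen U) (hUne : U.Nonempty) (hUcl : closure U ≠ Set.univ)
    (f : X → X)
    (hf : ∀ V : Set X, IsOpen V → V.Nonempty → (⋃ n : ℕ, f^[n] '' V) = Set.univ) :
    Function.Surjective f := by
  intro y
  have hVopen : IsOpen (closure U)ᶜ := isClosed_closure.isOpen_compl
  have hVne : ((closure U)ᶜ : Set X).Nonempty := by
    rw [Set.nonempty_compl]; exact hUcl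
  have h1 := hf _ hVopen hVne
  have h2 := hf U hUopen hUne
  have hy1 : y ∈ ⋃ n : ℕ, f^[n] '' (closure U)ᶜ := h1 ▸ Set.mem_univ y
  have hy2 : y ∈ ⋃ n : ℕ, f^[n] '' U := h2 ▸ Set.mem_univ y
  simp only [Set.mem_iUnion, Set.mem_image] at hy1 hy2
  obtain ⟨n, x, hx, hxy⟩ := hy1
  cases n with
  | succ n =>
    exact ⟨f^[n] x, by rw [← hxy, Function.iterate_succ_apply']⟩
  | zero =>
    simp only [Function.iterate_zero, id] at hxy
    subst hxy
    obtain ⟨m, u, hu, huy⟩ := hy2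
    cases m with
    | succ m => exact ⟨f^[m] u, by rw [← huy, Function.iterate_succ_apply']⟩
    | zero =>
      simp only [Function.iterate_zero, id] at huy
      exact absurd (huy ▸ subset_closure hu) hx
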